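/- Let μ be a Borel probability measure on ℝ such that β := ∫_ℝ |x|³ dμ(x) < ∞. Then for every t > 0 with t ≥ 10·β^{1/3}, the function g_{μ,t}(x) = ∫_ℝ ((x-y)² + t²)⁻¹ dμ(y) is twice differentiable on ℝ and its second derivative satisfies g_{μ,t}''(x) < 0 for every x with |x| ≤ t/4. -/

import Mathlib

open MeasureTheory Real Set Filter Topology

set_option maxHeartbeats 1600000 in
theorem cauchy_convolution_second_deriv_neg_large_time
    (μ : Measure ℝ) [IsProbabilityMeasure μ]
    (hint : Integrable (fun x : ℝ => |x| ^ 3) μ)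
    (β : ℝ) (hβ : β = ∫ x, |x| ^ 3 ∂μ)
    (t : ℝ) (ht0 : 0 < t) (ht : 10 * β ^ ((1 : ℝ) / 3) ≤ t) :
    Differentiable ℝ (fun x : ℝ => ∫ y, ((x - y) ^ 2 + t ^ 2)⁻¹ ∂μ) ∧
    Differentiable ℝ (deriv (fun x : ℝ => ∫ y, ((x - y) ^ 2 + t ^ 2)⁻¹ ∂μ)) ∧
    (∀ x : ℝ, |x| ≤ t / 4 →
      deriv (deriv (fun x : ℝ => ∫ y, ((x - y) ^ 2 + t ^ 2)⁻¹ ∂μ)) x < 0) := by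
  have ht2 : (0:ℝ) < t ^ 2 := by positivity
  have key : ∀ x y : ℝ, 0 < (x - y) ^ 2 + t ^ 2 := fun x y => by positivity
  set F₁ : ℝ → ℝ → ℝ := fun x y => -(2 * (x - y)) / ((x - y) ^ 2 + t ^ 2) ^ 2 with hF₁def
  set F₂ : ℝ → ℝ → ℝ :=
    fun x y => (8 * (x - y) ^ 2 - 2 * ((x - y) ^ 2 + t ^ 2)) / ((x - y) ^ 2 + t ^ 2) ^ 3
    with hF₂def
  -- continuity / measurability
  have contF : ∀ x : ℝ, Continuous (fun y => ((x - y) ^ 2 + t ^ 2)⁻¹) := fun x =>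
    Continuous.inv₀ (by continuity) (fun y => (key x y).ne')
  have contF₁ : ∀ x : ℝ, Continuous (F₁ x) := fun x =>
    Continuous.div (by continuity) (by continuity) (fun y => pow_ne_zero _ (key x y).ne')
  have contF₂ : ∀ x : ℝ, Continuous (F₂ x) := fun x =>
    Continuous.div (by continuity) (by continuity) (fun y => pow_ne_zero _ (key x y).ne')
  -- derivative formulas
  have hq : ∀ x y : ℝ, HasDerivAt (fun x : ℝ => (x - y) ^ 2 + t ^ 2) (2 * (x - y)) x := by
    intro x y
    have h := (((hasDerivAt_id x).sub_const y).pow 2).add_const (t ^ 2)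
    refine h.congr_deriv ?_
    simp
  have hd1 : ∀ x y : ℝ, HasDerivAt (fun x => ((x - y) ^ 2 + t ^ 2)⁻¹) (F₁ x y) x := fun x y =>
    (hq x y).inv (key x y).ne'
  have hd2 : ∀ x y : ℝ, HasDerivAt (fun x => F₁ x y) (F₂ x y) x := by
    intro x y
    have hnum : HasDerivAt (fun x : ℝ => -(2 * (x - y))) (-2) x := by
      have h := (((hasDerivAt_id x).sub_const y).const_mul 2).neg
      refine h.congr_deriv ?_
      norm_num
    have hden := (hq x y).pow 2
    have h := hnum.div hden (pow_ne_zero _ (key x y).ne')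
    refine h.congr_deriv ?_
    rw [hF₂def]
    simp only [Pi.pow_apply]
    have h0 := (key x y).ne'
    field_simp
    ring
  -- bounds
  have bnd1 : ∀ x y : ℝ, |F₁ x y| ≤ 1 / t ^ 3 := by
    intro x y
    rw [hF₁def]
    have hq0 := key x y
    rw [abs_div, abs_of_pos (pow_pos hq0 2),
      div_le_div_iff₀ (pow_pos hq0 2) (pow_pos ht0 3)]
    have ha : |(-(2 * (x - y)))| = 2 * |x - y| := by
      rw [abs_neg, abs_mul]; norm_num
    rw [ha]
    have h1 : |x - y| ^ 2 = (x - y) ^ 2 := sq_abs _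
    nlinarith [mul_nonneg (sq_nonneg (|x - y| - t)) ht2.le, abs_nonneg (x - y),
      sq_nonneg (x - y), sq_nonneg (|x - y| * t)]
  have bnd2 : ∀ x y : ℝ, |F₂ x y| ≤ 6 / t ^ 4 := by
    intro x y
    rw [hF₂def]
    have hq0 := key x y
    rw [abs_div, abs_of_pos (pow_pos hq0 3),
      div_le_div_iff₀ (pow_pos hq0 3) (pow_pos ht0 4)]
    have h1 : |8 * (x - y) ^ 2 - 2 * ((x - y) ^ 2 + t ^ 2)| ≤
        6 * ((x - y) ^ 2 + t ^ 2) := by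
      rw [abs_le]
      constructor <;> nlinarith [sq_nonneg (x - y)]
    have h4 : |8 * (x - y) ^ 2 - 2 * ((x - y) ^ 2 + t ^ 2)| * t ^ 4 ≤
        6 * ((x - y) ^ 2 + t ^ 2) * t ^ 4 :=
      mul_le_mul_of_nonneg_right h1 (by positivity)
    have h5 : t ^ 2 ≤ (x - y) ^ 2 + t ^ 2 := by nlinarith [sq_nonneg (x - y)]
    have h6 : t ^ 4 ≤ ((x - y) ^ 2 + t ^ 2) ^ 2 := by nlinarith [h5, ht2]
    have h7 : 6 * ((x - y) ^ 2 + t ^ 2) * t ^ 4 ≤ 6 * ((x - y) ^ 2 + t ^ 2) ^ 3 := by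
      nlinarith [h6, hq0]
    linarith
  -- integrability of F x
  have hintF : ∀ x : ℝ, Integrable (fun y => ((x - y) ^ 2 + t ^ 2)⁻¹) μ := by
    intro x
    refine Integrable.mono' (integrable_const ((t ^ 2)⁻¹)) (contF x).aestronglyMeasurable ?_
    filter_upwards with y
    rw [Real.norm_eq_abs, abs_of_pos (inv_pos.2 (key x y))]
    exact inv_anti₀ ht2 (by nlinarith [sq_nonneg (x - y)])
  -- first derivative under the integral
  have D1 : ∀ x₀ : ℝ, Integrable (F₁ x₀) μ ∧
      HasDerivAt (fun x => ∫ y, ((x - y) ^ 2 + t ^ 2)⁻¹ ∂μ) (∫ y, F₁ x₀ y ∂μ) x₀ := by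
    intro x₀
    apply hasDerivAt_integral_of_dominated_loc_of_deriv_le (bound := fun _ => 1 / t ^ 3)
      (s := Metric.ball x₀ 1) (Metric.ball_mem_nhds x₀ one_pos)
      (Filter.Eventually.of_forall fun x => (contF x).aestronglyMeasurable)
      (hintF x₀) ((contF₁ x₀).aestronglyMeasurable)
      ?_ (integrable_const _) ?_
    · filter_upwards with y
      intro x _
      rw [Real.norm_eq_abs]
      exact bnd1 x y
    · filter_upwards with y
      intro x _
      exact hd1 x y
  -- second derivative under the integral
  have D2 : ∀ x₀ : ℝ, Integrable (F₂ x₀) μ ∧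
      HasDerivAt (fun x => ∫ y, F₁ x y ∂μ) (∫ y, F₂ x₀ y ∂μ) x₀ := by
    intro x₀
    apply hasDerivAt_integral_of_dominated_loc_of_deriv_le (bound := fun _ => 6 / t ^ 4)
      (s := Metric.ball x₀ 1) (Metric.ball_mem_nhds x₀ one_pos)
      (Filter.Eventually.of_forall fun x => (contF₁ x).aestronglyMeasurable)
      ((D1 x₀).1) ((contF₂ x₀).aestronglyMeasurable)
      ?_ (integrable_const _) ?_
    · filter_upwards with y
      intro x _
      rw [Real.norm_eq_abs]
      exact bnd2 x y
    · filter_upwards with y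
      intro x _
      exact hd2 x y
  have hg1 : deriv (fun x => ∫ y, ((x - y) ^ 2 + t ^ 2)⁻¹ ∂μ) = fun x => ∫ y, F₁ x y ∂μ :=
    funext fun x => ((D1 x).2).deriv
  refine ⟨fun x => ((D1 x).2).differentiableAt, ?_, ?_⟩
  · rw [hg1]
    exact fun x => ((D2 x).2).differentiableAt
  · intro x hx
    rw [hg1, ((D2 x).2).deriv]
    -- numeric setup
    have hβ0 : 0 ≤ β := hβ ▸ integral_nonneg (fun y => by positivity)
    have hβt : 1000 * β ≤ t ^ 3 := by
      have h1 : β ^ ((1 : ℝ) / 3) ≤ t / 10 := by linarith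
      have h2 : (β ^ ((1 : ℝ) / 3)) ^ (3 : ℕ) ≤ (t / 10) ^ (3 : ℕ) :=
        pow_le_pow_left₀ (Real.rpow_nonneg hβ0 _) h1 3
      rw [← Real.rpow_natCast (β ^ ((1 : ℝ) / 3)) 3, ← Real.rpow_mul hβ0] at h2
      norm_num at h2
      nlinarith [h2]
    have ht4 : (0:ℝ) < t ^ 4 := by positivity
    have ht3 : (0:ℝ) < t ^ 3 := by positivity
    have ht7 : (0:ℝ) < t ^ 7 := by positivity
    set c₁ : ℝ := 32 / (125 * t ^ 4) with hc₁
    set c₂ : ℝ := 1 / (2 * t ^ 4) with hc₂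
    set K : ℝ := 64 * (c₁ + c₂) / t ^ 3 with hK
    have hc₁0 : 0 < c₁ := by rw [hc₁]; positivity
    have hc₂0 : 0 < c₂ := by rw [hc₂]; positivity
    have hK0 : 0 ≤ K := by rw [hK, hc₁, hc₂]; positivity
    have polyaux : ∀ s : ℝ, 0 ≤ s →
        (8 * s - 2 * (s + t ^ 2)) * (2 * t ^ 4) ≤ 1 * (s + t ^ 2) ^ 3 := by
      intro s hs
      nlinarith [mul_nonneg (sq_nonneg (s - t ^ 2)) (by linarith : (0:ℝ) ≤ s + 5 * t ^ 2)]
    have polyclose : ∀ s : ℝ, 0 ≤ s → s ≤ t ^ 2 / 4 →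
        (8 * s - 2 * (s + t ^ 2)) * (125 * t ^ 4) ≤ -32 * (s + t ^ 2) ^ 3 := by
      intro s hs hs2
      nlinarith [mul_nonneg (by linarith : (0:ℝ) ≤ t ^ 2 / 4 - s)
        (by positivity : (0:ℝ) ≤ 32 * s ^ 2 + 104 * s * t ^ 2 + 872 * t ^ 4)]
    -- global upper bound for F₂
    have F2le : ∀ y : ℝ, F₂ x y ≤ c₂ := by
      intro y
      rw [hF₂def, hc₂, div_le_div_iff₀ (pow_pos (key x y) 3) (by positivity)]
      exact polyaux _ (sq_nonneg _)
    -- close-range bound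
    have F2close : ∀ y : ℝ, (x - y) ^ 2 ≤ t ^ 2 / 4 → F₂ x y ≤ -c₁ := by
      intro y hy
      rw [hF₂def, hc₁, ← neg_div,
        div_le_div_iff₀ (pow_pos (key x y) 3) (by positivity : (0:ℝ) < 125 * t ^ 4)]
      exact polyclose _ (sq_nonneg _) hy
    -- pointwise domination
    have hpt : ∀ y : ℝ, F₂ x y ≤ K * |y| ^ 3 - c₁ := by
      intro y
      rcases le_or_gt ((x - y) ^ 2) (t ^ 2 / 4) with hcase | hcase
      · have h1 := F2close y hcase
        have h2 : 0 ≤ K * |y| ^ 3 := mul_nonneg hK0 (by positivity)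
        linarith
      · have h2 := F2le y
        have hxy : t / 2 ≤ |x - y| := by
          by_contra h
          push_neg at h
          have : (x - y) ^ 2 ≤ t ^ 2 / 4 := by
            have := abs_nonneg (x - y)
            nlinarith [sq_abs (x - y)]
          linarith
        have hy4 : t / 4 ≤ |y| := by
          have h3 : |x - y| ≤ |x| + |y| := abs_sub x y
          linarith
        have hy3 : t ^ 3 / 64 ≤ |y| ^ 3 := by
          calc t ^ 3 / 64 = (t / 4) ^ 3 := by ring
            _ ≤ |y| ^ 3 := pow_le_pow_left₀ (by positivity) hy4 3
        have hKc : K * (t ^ 3 / 64) = c₁ + c₂ := by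
          rw [hK]; field_simp
        nlinarith [mul_le_mul_of_nonneg_left hy3 hK0]
    -- integrate the bound
    have hRint : Integrable (fun y : ℝ => K * |y| ^ 3 - c₁) μ :=
      (hint.const_mul K).sub (integrable_const c₁)
    have hmono : ∫ y, F₂ x y ∂μ ≤ ∫ y, (K * |y| ^ 3 - c₁) ∂μ :=
      integral_mono (D2 x).1 hRint hpt
    have hval : ∫ y, (K * |y| ^ 3 - c₁) ∂μ = K * β - c₁ := by
      rw [integral_sub (hint.const_mul K) (integrable_const c₁),
        integral_const_mul, integral_const, hβ]
      simp
    have hfin : K * β - c₁ < 0 := by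
      have hKval : K = 12096 / (250 * t ^ 7) := by
        rw [hK, hc₁, hc₂]
        field_simp
        ring
      rw [hKval, hc₁, sub_neg, div_mul_eq_mul_div,
        div_lt_div_iff₀ (by positivity : (0:ℝ) < 250 * t ^ 7) (by positivity : (0:ℝ) < 125 * t ^ 4)]
      nlinarith [mul_le_mul_of_nonneg_right hβt ht4.le, ht7]
    calc ∫ y, F₂ x y ∂μ ≤ K * β - c₁ := hval ▸ hmono
      _ < 0 := hfin
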